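/- Let R be a subring of a ring S, and suppose S is a central extension of R, i.e., S is generated as a left R-module by C_S(R) = {s ∈ S : sr = rs for all r ∈ R}. If S is a prime ring, then R is a prime ring; if S is a semiprime ring, then R is a semiprime ring. -/

import Mathlib

/-- `S` is a central extension of its subring `R`: `S` is generated as a left
`R`-module by the centralizer `C_S(R)`. -/
def IsCentralExtension {S : Type*} [Ring S] (R : Subring S) : Prop :=
  AddSubgroup.closure
    {s : S | ∃ r ∈ R, ∃ c : S, (∀ x ∈ R, c * x = x * c) ∧ s = r * c} = ⊤

/-- A ring `A` is prime if `aAb = 0` implies `a = 0` or `b = 0`. -/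
def IsPrimeRing (A : Type*) [Ring A] : Prop :=
  ∀ a b : A, (∀ x : A, a * x * b = 0) → a = 0 ∨ b = 0

/-- A ring `A` is semiprime if `aAa = 0` implies `a = 0`. -/
def IsSemiprimeRing (A : Type*) [Ring A] : Prop :=
  ∀ a : A, (∀ x : A, a * x * a = 0) → a = 0


private lemma key {S : Type*} [Ring S] (R : Subring S)
    (hcentral : IsCentralExtension R) (a b : S) (hb : b ∈ R)
    (h : ∀ x ∈ R, a * x * b = 0) : ∀ s : S, a * s * b = 0 := by
  intro s
  have hs : s ∈ AddSubgroup.closure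
      {s : S | ∃ r ∈ R, ∃ c : S, (∀ x ∈ R, c * x = x * c) ∧ s = r * c} := by
    rw [hcentral]; trivial
  induction hs using AddSubgroup.closure_induction with
  | mem t ht =>
    obtain ⟨r, hr, c, hc, rfl⟩ := ht
    have : a * (r * c) * b = a * r * b * c := by
      calc a * (r * c) * b = a * r * (c * b) := by rw [← mul_assoc, mul_assoc]
        _ = a * r * (b * c) := by rw [hc b hb]
        _ = a * r * b * c := by simp [mul_assoc]
    rw [this, h r hr, zero_mul]
  | zero => simp
  | add x y _ _ hx hy =>
    rw [mul_add, add_mul, hx, hy, add_zero]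
  | neg x _ hx =>
    simp only [mul_neg, neg_mul, hx, neg_zero]

/-- If `S` is a central extension of a subring `R` and `S` is prime
(resp. semiprime), then `R` is prime (resp. semiprime). -/
theorem stmt17 {S : Type*} [Ring S] (R : Subring S)
    (hcentral : IsCentralExtension R) :
    (IsPrimeRing S →
      ∀ a ∈ R, ∀ b ∈ R, (∀ x ∈ R, a * x * b = 0) → a = 0 ∨ b = 0) ∧
    (IsSemiprimeRing S →
      ∀ a ∈ R, (∀ x ∈ R, a * x * a = 0) → a = 0) := by
  constructor
  · intro hS a ha b hb h
    exact hS a b (fun x => key R hcentral a b hb h x)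
  · intro hS a ha h
    exact hS a (fun x => key R hcentral a a ha h x)
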